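/- In the affine root system of type A_n^{(1)} with n ≥ 2, indexing the simple roots by ℤ/(n+1)ℤ arranged in a cycle, the set of quantum roots is exactly the set of roots of the form α_{k̄} + α_{k+1 bar} + ⋯ + α_{m̄} (a sum of simple roots over a proper 'arc' of consecutive vertices of the cycle). Equivalently, the quantum roots are exactly the positive real roots all of whose simple-root coefficients lie in {0,1}. -/

import Mathlib

structure KMD (I : Type) [Fintype I] [DecidableEq I] where
  A : I → I → ℤ
  A_diag : ∀ i, A i i = 2
  A_offdiag : ∀ i j, i ≠ j → A i j ≤ 0
  A_symm_zero : ∀ i j, A i j = 0 → A j i = 0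
  X : Type
  Y : Type
  [addX : AddCommGroup X]
  [addY : AddCommGroup Y]
  P : Y →ₗ[ℤ] X →ₗ[ℤ] ℤ
  α : I → X
  αv : I → Y
  indep_α : LinearIndependent ℤ α
  indep_αv : LinearIndependent ℤ αv
  pair_simple : ∀ i j, P (αv i) (α j) = A i j

attribute [instance] KMD.addX KMD.addY

namespace KMD

open scoped Classical

variable {I : Type} [Fintype I] [DecidableEq I] (S : KMD I)

/-- The simple reflection on `X`, as a linear map. -/
def preReflX (i : I) : S.X →ₗ[ℤ] S.X :=
  LinearMap.id - (S.P (S.αv i)).smulRight (S.α i)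

lemma preReflX_apply (i : I) (x : S.X) :
    S.preReflX i x = x - S.P (S.αv i) x • S.α i := by
  simp [preReflX]

lemma preReflX_invol (i : I) : Function.Involutive (S.preReflX i) := by
  intro x
  have h2 : S.P (S.αv i) (S.α i) = 2 := by rw [S.pair_simple i i, S.A_diag i]
  have hp : S.P (S.αv i) (x - S.P (S.αv i) x • S.α i) = -(S.P (S.αv i) x) := by
    rw [map_sub, LinearMap.map_smul, h2, smul_eq_mul]; ring
  simp only [S.preReflX_apply, hp]
  module

/-- The simple reflection `r_i` acting on `X`. -/
def reflX (i : I) : S.X ≃ₗ[ℤ] S.X :=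
  { S.preReflX i with
    invFun := S.preReflX i
    left_inv := S.preReflX_invol i
    right_inv := S.preReflX_invol i }

def preReflY (i : I) : S.Y →ₗ[ℤ] S.Y :=
  LinearMap.id - (S.P.flip (S.α i)).smulRight (S.αv i)

lemma preReflY_apply (i : I) (y : S.Y) :
    S.preReflY i y = y - S.P y (S.α i) • S.αv i := by
  simp [preReflY]

lemma preReflY_invol (i : I) : Function.Involutive (S.preReflY i) := by
  intro y
  have h2 : S.P (S.αv i) (S.α i) = 2 := by rw [S.pair_simple i i, S.A_diag i]
  have hp : S.P (y - S.P y (S.α i) • S.αv i) (S.α i) = -(S.P y (S.α i)) := by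
    rw [map_sub, LinearMap.map_smul, LinearMap.sub_apply, LinearMap.smul_apply, h2,
      smul_eq_mul]; ring
  simp only [S.preReflY_apply, hp]
  module

/-- The simple reflection `r_i` acting contragrediently on `Y`. -/
def reflY (i : I) : S.Y ≃ₗ[ℤ] S.Y :=
  { S.preReflY i with
    invFun := S.preReflY i
    left_inv := S.preReflY_invol i
    right_inv := S.preReflY_invol i }

/-- The product `r_{i_1} ⋯ r_{i_k}` of simple reflections on `X` indexed by a word. -/
def wordX (l : List I) : S.X ≃ₗ[ℤ] S.X := (l.map S.reflX).prod

def wordY (l : List I) : S.Y ≃ₗ[ℤ] S.Y := (l.map S.reflY).prod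

/-- Real roots: the Weyl-group orbit of the simple roots. -/
def IsRoot (x : S.X) : Prop := ∃ p : List I × I, x = S.wordX p.1 (S.α p.2)

def IsPosRoot (x : S.X) : Prop :=
  S.IsRoot x ∧ ∃ c : I → ℕ, x = ∑ i, (c i : ℤ) • S.α i

def IsNegRoot (x : S.X) : Prop :=
  S.IsRoot x ∧ ∃ c : I → ℕ, x = -∑ i, (c i : ℤ) • S.α i

/-- The coroot `β∨` associated to a real root `β`. -/
noncomputable def coroot (x : S.X) : S.Y :=
  if h : S.IsRoot x then S.wordY h.choose.1 (S.αv h.choose.2) else 0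

/-- The reflection `s_β` associated to a real root `β`, acting on `X`. -/
noncomputable def sReflX (x : S.X) : S.X ≃ₗ[ℤ] S.X :=
  if h : S.IsRoot x then S.wordX h.choose.1 * S.reflX h.choose.2 * (S.wordX h.choose.1)⁻¹
  else 1

/-- The reflection `s_β` acting on `Y`. -/
noncomputable def sReflY (x : S.X) : S.Y ≃ₗ[ℤ] S.Y :=
  if h : S.IsRoot x then S.wordY h.choose.1 * S.reflY h.choose.2 * (S.wordY h.choose.1)⁻¹
  else 1

/-- The inversion set `Inv(w) = {γ ∈ Φ₊ | w γ ∈ Φ₋}`. -/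
def InvSet (w : S.X ≃ₗ[ℤ] S.X) : Set S.X := {γ | S.IsPosRoot γ ∧ S.IsNegRoot (w γ)}

/-- Height of an element of the coroot lattice. -/
noncomputable def htv (y : S.Y) : ℤ :=
  if h : ∃ c : I → ℤ, y = ∑ i, c i • S.αv i then ∑ i, h.choose i else 0

/-- Coordinates of an element of the coroot lattice in the basis of simple coroots. -/
noncomputable def coeffY (y : S.Y) : I → ℤ :=
  if h : ∃ c : I → ℤ, y = ∑ i, c i • S.αv i then h.choose else 0

/-- A quantum root: a positive real root `β` with `⟨β∨, γ⟩ = 1` for every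
`γ ∈ Inv(s_β) \ {β}`. -/
def IsQuantum (β : S.X) : Prop :=
  S.IsPosRoot β ∧ ∀ γ ∈ S.InvSet (S.sReflX β), γ ≠ β → S.P (S.coroot β) γ = 1

/-- Word length with respect to the simple reflections. -/
noncomputable def len (w : S.X ≃ₗ[ℤ] S.X) : ℕ :=
  sInf {n | ∃ l : List I, l.length =  n ∧ w = S.wordX l}

/-- The Dynkin diagram of the generalized Cartan matrix, as a simple graph. -/
def dynkinGraph : SimpleGraph I where
  Adj i j := i ≠ j ∧ S.A i j ≠ 0
  symm := by
    constructor
    rintro i j ⟨hne, hz⟩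
    exact ⟨hne.symm, fun h0 => hz (S.A_symm_zero j i h0)⟩
  loopless := by
    constructor
    rintro i ⟨hne, -⟩
    exact hne rfl

/-- The support `I₁(β)` of a root `β`. -/
noncomputable def suppRoot (β : S.X) : Set I := {i | 1 ≤ S.coeffY (S.coroot β) i}

end KMD

namespace KMD
open scoped Classical
variable {I : Type} [Fintype I] [DecidableEq I] (S : KMD I)

def phi (c : I → ℤ) : S.X := ∑ i, c i • S.α i

lemma phi_inj {c d : I → ℤ} (h : S.phi c = S.phi d) : c = d := by
  have := Fintype.linearIndependent_iff.mp S.indep_α (c - d) ?_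
  · funext i; have := this i; simp [Pi.sub_apply, sub_eq_zero] at this; exact this
  · simp only [Pi.sub_apply, sub_smul, Finset.sum_sub_distrib]
    rw [show (∑ i, c i • S.α i) = S.phi c from rfl, show (∑ i, d i • S.α i) = S.phi d from rfl, h, sub_self]

lemma phi_add (c d : I → ℤ) : S.phi (c + d) = S.phi c + S.phi d := by
  simp [phi, add_smul, Finset.sum_add_distrib]

lemma phi_sub (c d : I → ℤ) : S.phi (c - d) = S.phi c - S.phi d := by
  simp [phi, sub_smul, Finset.sum_sub_distrib]

lemma phi_neg (c : I → ℤ) : S.phi (-c) = -(S.phi c) := by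
  simp [phi]

lemma phi_smul (t : ℤ) (c : I → ℤ) : S.phi (t • c) = t • S.phi c := by
  simp [phi, Finset.smul_sum, smul_smul]

lemma phi_zero : S.phi 0 = 0 := by simp [phi]

lemma phi_single (i : I) : S.phi (Pi.single i 1) = S.α i := by
  rw [phi, Finset.sum_eq_single i] <;> simp +contextual [Pi.single_apply]

def piF (i : I) (c : I → ℤ) : ℤ := ∑ j, S.A i j * c j

lemma pairP (i : I) (c : I → ℤ) : S.P (S.αv i) (S.phi c) = S.piF i c := by
  simp [phi, piF, S.pair_simple, mul_comm]

def rho (i : I) (c : I → ℤ) : I → ℤ := c - S.piF i c • Pi.single i 1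

lemma phi_rho (i : I) (c : I → ℤ) : S.phi (S.rho i c) = S.reflX i (S.phi c) := by
  have : S.reflX i (S.phi c) = S.phi c - S.P (S.αv i) (S.phi c) • S.α i := S.preReflX_apply i _
  rw [this, S.pairP, rho, phi_sub]
  congr 1
  simp [phi, smul_smul]
  rw [Finset.sum_eq_single i] <;> simp +contextual [Pi.single_apply]

lemma wordX_nil (x : S.X) : S.wordX [] x = x := rfl

lemma wordX_cons (i : I) (l : List I) (x : S.X) :
    S.wordX (i :: l) x = S.reflX i (S.wordX l x) := rfl

lemma wordX_append (l₁ l₂ : List I) (x : S.X) :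
    S.wordX (l₁ ++ l₂) x = S.wordX l₁ (S.wordX l₂ x) := by
  induction l₁ generalizing x with
  | nil => rfl
  | cons i l ih => rw [List.cons_append, wordX_cons, wordX_cons, ih]

lemma reflX_invol (i : I) (x : S.X) : S.reflX i (S.reflX i x) = x :=
  S.preReflX_invol i x

lemma wordX_inv (l : List I) (x : S.X) : S.wordX l (S.wordX l.reverse x) = x := by
  induction l generalizing x with
  | nil => rfl
  | cons i l ih =>
    rw [wordX_cons, List.reverse_cons, wordX_append]
    simp only [wordX]
    show S.reflX i (S.wordX l (S.wordX l.reverse (S.wordX [i] x))) = x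
    rw [ih, show S.wordX [i] x = S.reflX i x from by simp [wordX], reflX_invol]

lemma wordX_inv' (l : List I) (x : S.X) : S.wordX l.reverse (S.wordX l x) = x := by
  have := S.wordX_inv l.reverse x
  rwa [List.reverse_reverse] at this

lemma wordY_cons (i : I) (l : List I) (y : S.Y) :
    S.wordY (i :: l) y = S.reflY i (S.wordY l y) := rfl

lemma pair_refl_invar (i : I) (y : S.Y) (x : S.X) :
    S.P (S.reflY i y) (S.reflX i x) = S.P y x := by
  have hx : S.reflX i x = x - S.P (S.αv i) x • S.α i := S.preReflX_apply i x
  have hy : S.reflY i y = y - S.P y (S.α i) • S.αv i := S.preReflY_apply i y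
  rw [hx, hy]
  have h2 : S.P (S.αv i) (S.α i) = 2 := by rw [S.pair_simple i i, S.A_diag i]
  simp only [map_sub, LinearMap.map_smul, LinearMap.sub_apply, LinearMap.smul_apply,
    smul_eq_mul, h2]
  ring

lemma pair_word_invar (l : List I) (y : S.Y) (x : S.X) :
    S.P (S.wordY l y) (S.wordX l x) = S.P y x := by
  induction l generalizing x y with
  | nil => rfl
  | cons i l ih => rw [wordX_cons, wordY_cons, pair_refl_invar, ih]

def Rho (l : List I) (c : I → ℤ) : I → ℤ := l.foldr S.rho c

lemma wordX_phi (l : List I) (c : I → ℤ) : S.wordX l (S.phi c) = S.phi (S.Rho l c) := by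
  induction l with
  | nil => rfl
  | cons i l ih =>
    rw [wordX_cons, ih, show S.Rho (i :: l) c = S.rho i (S.Rho l c) from rfl, phi_rho]

lemma isRoot_wordX (l : List I) {x : S.X} (h : S.IsRoot x) : S.IsRoot (S.wordX l x) := by
  obtain ⟨p, hp⟩ := h
  exact ⟨⟨l ++ p.1, p.2⟩, by rw [hp, ← wordX_append]⟩

lemma isRoot_neg {x : S.X} (h : S.IsRoot x) : S.IsRoot (-x) := by
  obtain ⟨⟨l, i⟩, hp⟩ := h
  refine ⟨⟨l ++ [i], i⟩, ?_⟩
  rw [wordX_append, show S.wordX [i] (S.α i) = S.reflX i (S.α i) from by simp [wordX]]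
  have : S.reflX i (S.α i) = -(S.α i) := by
    have := S.preReflX_apply i (S.α i)
    have h2 : S.P (S.αv i) (S.α i) = 2 := by rw [S.pair_simple i i, S.A_diag i]
    rw [h2] at this
    show S.preReflX i (S.α i) = _
    rw [this]; module
  rw [this, map_neg, hp]

lemma isRoot_coords {x : S.X} (h : S.IsRoot x) : ∃ c, x = S.phi c := by
  obtain ⟨⟨l, i⟩, hp⟩ := h
  exact ⟨S.Rho l (Pi.single i 1), by rw [hp, ← phi_single, wordX_phi]⟩

lemma root_ne_zero {x : S.X} (h : S.IsRoot x) : x ≠ 0 := by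
  obtain ⟨⟨l, i⟩, hp⟩ := h
  rw [hp]
  intro h0
  have : S.α i = 0 := by
    have := congrArg (S.wordX l.reverse) h0
    rw [wordX_inv', map_zero] at this
    exact this
  exact S.indep_α.ne_zero i this

def BF (c d : I → ℤ) : ℤ := ∑ i, c i * S.piF i d

lemma BF_single (i : I) (d : I → ℤ) : S.BF (Pi.single i 1) d = S.piF i d := by
  rw [BF, Finset.sum_eq_single i] <;> simp +contextual [Pi.single_apply]

variable (hA : ∀ i j, S.A i j = S.A j i)
include hA

lemma BF_symm (c d : I → ℤ) : S.BF c d = S.BF d c := by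
  simp only [BF, piF, Finset.mul_sum]
  rw [Finset.sum_comm]
  refine Finset.sum_congr rfl fun i _ => Finset.sum_congr rfl fun j _ => ?_
  rw [hA i j]; ring

omit hA

lemma BF_sub_left (c c' d : I → ℤ) : S.BF (c - c') d = S.BF c d - S.BF c' d := by
  simp [BF, sub_mul, Finset.sum_sub_distrib]

lemma BF_sub_right (c d d' : I → ℤ) : S.BF c (d - d') = S.BF c d - S.BF c d' := by
  simp [BF, piF, mul_sub, Finset.sum_sub_distrib, Finset.mul_sum]

lemma BF_smul_left (t : ℤ) (c d : I → ℤ) : S.BF (t • c) d = t * S.BF c d := by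
  simp [BF, Finset.mul_sum, mul_assoc]

lemma BF_smul_right (t : ℤ) (c d : I → ℤ) : S.BF c (t • d) = t * S.BF c d := by
  simp only [BF, piF, Pi.smul_apply, smul_eq_mul, Finset.mul_sum]
  refine Finset.sum_congr rfl fun i _ => Finset.sum_congr rfl fun j _ => by ring

lemma piF_single (i : I) : S.piF i (Pi.single i 1) = 2 := by
  rw [piF, Finset.sum_eq_single i] <;> simp +contextual [Pi.single_apply, S.A_diag]

include hA

lemma BF_rho_invar (i : I) (c d : I → ℤ) : S.BF (S.rho i c) (S.rho i d) = S.BF c d := by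
  have hce : S.BF c (Pi.single i 1) = S.piF i c := by
    rw [S.BF_symm hA, BF_single]
  have hde : S.BF (Pi.single i 1) d = S.piF i d := S.BF_single i d
  simp only [rho, BF_sub_left, BF_sub_right, BF_smul_left, BF_smul_right, BF_single,
    S.piF_single, hce]
  ring

lemma BF_Rho_invar (l : List I) (c d : I → ℤ) : S.BF (S.Rho l c) (S.Rho l d) = S.BF c d := by
  induction l with
  | nil => rfl
  | cons i l ih =>
    rw [show S.Rho (i :: l) c = S.rho i (S.Rho l c) from rfl,
      show S.Rho (i :: l) d = S.rho i (S.Rho l d) from rfl, S.BF_rho_invar hA, ih]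

lemma root_norm {x : S.X} (h : S.IsRoot x) : ∃ c, x = S.phi c ∧ S.BF c c = 2 := by
  obtain ⟨⟨l, i⟩, hp⟩ := h
  refine ⟨S.Rho l (Pi.single i 1), by rw [hp, ← phi_single, wordX_phi], ?_⟩
  rw [S.BF_Rho_invar hA, BF_single, piF_single]

omit hA

lemma coroot_spec {x : S.X} (h : S.IsRoot x) :
    S.coroot x = S.wordY h.choose.1 (S.αv h.choose.2) := by
  rw [coroot, dif_pos h]

lemma sReflX_spec {x : S.X} (h : S.IsRoot x) :
    S.sReflX x = S.wordX h.choose.1 * S.reflX h.choose.2 * (S.wordX h.choose.1)⁻¹ := by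
  rw [sReflX, dif_pos h]

lemma choose_spec_root {x : S.X} (h : S.IsRoot x) :
    x = S.wordX h.choose.1 (S.α h.choose.2) := h.choose_spec

lemma sReflX_apply {x : S.X} (h : S.IsRoot x) (z : S.X) :
    S.sReflX x z = z - S.P (S.coroot x) z • x := by
  rw [S.sReflX_spec h, S.coroot_spec h]
  set l := h.choose.1
  set i := h.choose.2
  have hinv : ((S.wordX l)⁻¹ : S.X ≃ₗ[ℤ] S.X) z = S.wordX l.reverse z := by
    apply (S.wordX l).injective
    have h1 : S.wordX l (((S.wordX l)⁻¹ : S.X ≃ₗ[ℤ] S.X) z) = z :=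
      (S.wordX l).apply_symm_apply z
    rw [h1, S.wordX_inv]
  show S.wordX l (S.reflX i (((S.wordX l)⁻¹ : S.X ≃ₗ[ℤ] S.X) z)) = _
  rw [hinv]
  have hz : S.wordX l (S.wordX l.reverse z) = z := S.wordX_inv l z
  have hrefl : S.reflX i (S.wordX l.reverse z) =
      S.wordX l.reverse z - S.P (S.αv i) (S.wordX l.reverse z) • S.α i :=
    S.preReflX_apply i _
  rw [hrefl, map_sub, map_smul, hz, ← S.choose_spec_root h]
  congr 2
  calc S.P (S.αv i) (S.wordX l.reverse z)
      = S.P (S.wordY l (S.αv i)) (S.wordX l (S.wordX l.reverse z)) := (S.pair_word_invar l _ _).symm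
    _ = S.P (S.wordY l (S.αv i)) z := by rw [hz]

lemma isRoot_sReflX {x : S.X} (h : S.IsRoot x) {z : S.X} (hz : S.IsRoot z) :
    S.IsRoot (S.sReflX x z) := by
  rw [S.sReflX_spec h]
  set l := h.choose.1
  set i := h.choose.2
  have hinv : ((S.wordX l)⁻¹ : S.X ≃ₗ[ℤ] S.X) z = S.wordX l.reverse z := by
    apply (S.wordX l).injective
    have h1 : S.wordX l (((S.wordX l)⁻¹ : S.X ≃ₗ[ℤ] S.X) z) = z :=
      (S.wordX l).apply_symm_apply z
    rw [h1, S.wordX_inv]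
  show S.IsRoot (S.wordX l (S.reflX i (((S.wordX l)⁻¹ : S.X ≃ₗ[ℤ] S.X) z)))
  rw [hinv]
  exact S.isRoot_wordX l (by
    have : S.reflX i (S.wordX l.reverse z) = S.wordX [i] (S.wordX l.reverse z) := rfl
    rw [this, ← wordX_append]
    exact S.isRoot_wordX _ hz)

lemma coroot_pair (hA : ∀ i j, S.A i j = S.A j i) {x : S.X} (h : S.IsRoot x) {b : I → ℤ}
    (hb : x = S.phi b) (g : I → ℤ) : S.P (S.coroot x) (S.phi g) = S.BF b g := by
  rw [S.coroot_spec h]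
  set l := h.choose.1
  set i := h.choose.2
  set g' := S.Rho l.reverse g with hg'
  have hg : S.wordX l (S.phi g') = S.phi g := by
    rw [hg', ← wordX_phi, S.wordX_inv]
  calc S.P (S.wordY l (S.αv i)) (S.phi g)
      = S.P (S.wordY l (S.αv i)) (S.wordX l (S.phi g')) := by rw [hg]
    _ = S.P (S.αv i) (S.phi g') := S.pair_word_invar l _ _
    _ = S.piF i g' := S.pairP i g'
    _ = S.BF (Pi.single i 1) g' := (S.BF_single i g').symm
    _ = S.BF (S.Rho l (Pi.single i 1)) (S.Rho l g') := (S.BF_Rho_invar hA l _ _).symm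
    _ = S.BF b g := by
        have h1 : S.Rho l (Pi.single i 1) = b := by
          apply S.phi_inj
          rw [← wordX_phi, phi_single, ← S.choose_spec_root h, hb]
        have h2 : S.Rho l g' = g := by
          apply S.phi_inj
          rw [← wordX_phi, hg]
        rw [h1, h2]

section TypeA

variable {n : ℕ} (hn : 2 ≤ n) (S : KMD (ZMod (n+1)))

lemma cast_ne_zero' {k : ℕ} (hk1 : 1 ≤ k) (hk : k ≤ n) : ((k:ℕ) : ZMod (n+1)) ≠ 0 := by
  rw [Ne, ZMod.natCast_eq_zero_iff]
  intro hd
  have := Nat.le_of_dvd (by omega) hd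
  omega

include hn

lemma one_ne_zero'' : (1 : ZMod (n+1)) ≠ 0 := by
  have := cast_ne_zero' (n := n) (k := 1) le_rfl (by omega)
  simpa using this

lemma two_ne_zero'' : (2 : ZMod (n+1)) ≠ 0 := by
  have := cast_ne_zero' (n := n) (k := 2) (by omega) (by omega)
  simpa using this

variable (h1 : ∀ i : ZMod (n + 1), S.A i (i + 1) = -1)
  (h2 : ∀ i : ZMod (n + 1), S.A i (i - 1) = -1)
  (h0 : ∀ i j : ZMod (n + 1), j ≠ i → j ≠ i + 1 → j ≠ i - 1 → S.A i j = 0)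

include h1 h2 h0

lemma A_symm : ∀ i j, S.A i j = S.A j i := by
  intro i j
  by_cases hji : j = i
  · rw [hji]
  by_cases hj1 : j = i + 1
  · subst hj1
    have hx := h2 (i+1)
    rw [add_sub_cancel_right] at hx
    rw [h1 i, hx]
  by_cases hj2 : j = i - 1
  · subst hj2
    have hx := h1 (i-1)
    rw [sub_add_cancel] at hx
    rw [h2 i, hx]
  · rw [h0 i j hji hj1 hj2, h0 j i, ]
    · exact fun hij => hji (by rw [hij])
    · exact fun hij => hj2 (by rw [hij]; ring)
    · exact fun hij => hj1 (by rw [hij]; ring)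

lemma piF_eq (i : ZMod (n+1)) (c : ZMod (n+1) → ℤ) :
    S.piF i c = 2 * c i - c (i+1) - c (i-1) := by
  have hne1 : (1 : ZMod (n+1)) ≠ 0 := one_ne_zero'' hn
  have hne2 : (2 : ZMod (n+1)) ≠ 0 := two_ne_zero'' hn
  have d1 : i + 1 ≠ i := by
    intro h; exact hne1 (by linear_combination h)
  have d2 : i - 1 ≠ i := by
    intro h; exact hne1 (by linear_combination -h)
  have d3 : i + 1 ≠ i - 1 := by
    intro h; exact hne2 (by linear_combination h)
  have hsub : ({i, i+1, i-1} : Finset (ZMod (n+1))) ⊆ Finset.univ := Finset.subset_univ _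
  rw [piF, ← Finset.sum_subset hsub (fun x _ hx => ?_)]
  · rw [Finset.sum_insert (by
        simp only [Finset.mem_insert, Finset.mem_singleton]
        push_neg
        exact ⟨Ne.symm d1, Ne.symm d2⟩),
      Finset.sum_insert (by simpa using d3),
      Finset.sum_singleton, S.A_diag, h1, h2]
    ring
  · simp only [Finset.mem_insert, Finset.mem_singleton, not_or] at hx
    rw [h0 i x hx.1 hx.2.1 hx.2.2, zero_mul]

omit h1 h2 h0 hn

lemma shift_sum (g : ZMod (n+1) → ℤ) : ∑ i, g (i + 1) = ∑ i, g i :=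
  Fintype.sum_equiv (Equiv.addRight (1 : ZMod (n+1))) _ _ (fun _ => rfl)

include hn h1 h2 h0

lemma BF_quad (c : ZMod (n+1) → ℤ) : S.BF c c = ∑ i, (c i - c (i+1))^2 := by
  have lhs : S.BF c c =
      (∑ i, 2 * c i ^ 2) - (∑ i, c i * c (i+1)) - (∑ i, c i * c (i-1)) := by
    rw [BF, ← Finset.sum_sub_distrib, ← Finset.sum_sub_distrib]
    refine Finset.sum_congr rfl fun i _ => ?_
    rw [piF_eq hn S h1 h2 h0]
    ring
  have e1 : (∑ i, c i * c (i-1)) = ∑ i, c i * c (i+1) := by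
    have := shift_sum (n := n) (fun i => c i * c (i - 1))
    simp only [add_sub_cancel_right] at this
    rw [← this]
    exact Finset.sum_congr rfl fun i _ => mul_comm _ _
  have e2 : (∑ i, c (i+1) ^ 2) = ∑ i, c i ^ 2 := shift_sum (n := n) (fun i => c i ^ 2)
  have rhs : (∑ i, (c i - c (i+1))^2) =
      (∑ i, c i ^ 2) - (∑ i, 2 * (c i * c (i+1))) + (∑ i, c (i+1) ^ 2) := by
    rw [← Finset.sum_sub_distrib, ← Finset.sum_add_distrib]
    refine Finset.sum_congr rfl fun i _ => by ring
  have e3 : (∑ i, 2 * c i ^ 2) = 2 * ∑ i, c i ^ 2 := by rw [Finset.mul_sum]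
  have e4 : (∑ i, 2 * (c i * c (i+1))) = 2 * ∑ i, c i * c (i+1) := by rw [Finset.mul_sum]
  rw [lhs, rhs, e1, e2, e3, e4]
  ring

lemma BF_self_nonneg (c : ZMod (n+1) → ℤ) : 0 ≤ S.BF c c := by
  rw [BF_quad hn S h1 h2 h0]
  exact Finset.sum_nonneg fun i _ => sq_nonneg _

lemma BF_zero_const {c : ZMod (n+1) → ℤ} (hz : S.BF c c = 0) : ∀ i, c i = c 0 := by
  rw [BF_quad hn S h1 h2 h0] at hz
  have hstep : ∀ i, c (i + 1) = c i := by
    intro i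
    have := (Finset.sum_eq_zero_iff_of_nonneg (fun i _ => sq_nonneg (c i - c (i+1)))).mp hz
      i (Finset.mem_univ i)
    have := pow_eq_zero_iff (n := 2) (by omega) |>.mp this
    omega
  have key : ∀ k : ℕ, c ((k : ℕ) : ZMod (n+1)) = c 0 := by
    intro k
    induction k with
    | zero => simp
    | succ k ih => rw [Nat.cast_succ, hstep, ih]
  intro i
  have := key i.val
  rwa [ZMod.natCast_rightInverse i] at this

lemma piF_delta (i : ZMod (n+1)) : S.piF i (fun _ => 1) = 0 := by
  rw [piF_eq hn S h1 h2 h0]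
  ring

omit hn h1 h2 h0

lemma BF_delta_right (hpd : ∀ i, S.piF i (fun _ => 1) = 0) (c : ZMod (n+1) → ℤ) :
    S.BF c (fun _ => 1) = 0 := by
  rw [BF]
  simp [hpd]

lemma Rho_delta (hpd : ∀ i, S.piF i (fun _ => 1) = 0) (l : List (ZMod (n+1))) :
    S.Rho l (fun _ => 1) = fun _ => 1 := by
  induction l with
  | nil => rfl
  | cons i l ih =>
    show S.rho i (S.Rho l (fun _ => 1)) = _
    rw [ih, rho, hpd]
    simp

include hn h1 h2 h0

lemma sum_range_cycle (g : ZMod (n+1) → ℤ) (j : ZMod (n+1)) :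
    ∑ s ∈ Finset.range (n+1), g (j + (s:ℕ)) = ∑ i, g i := by
  haveI : NeZero (n+1) := ⟨Nat.succ_ne_zero n⟩
  refine Finset.sum_nbij' (fun s => j + (s : ZMod (n+1))) (fun x => (x - j).val)
    ?_ ?_ ?_ ?_ ?_
  · exact fun a _ => Finset.mem_univ _
  · exact fun x _ => Finset.mem_range.mpr (ZMod.val_lt _)
  · intro a ha
    show (j + (a : ZMod (n+1)) - j).val = a
    rw [add_sub_cancel_left, ZMod.val_cast_of_lt (Finset.mem_range.mp ha)]
  · intro x _
    show j + (((x - j).val : ℕ) : ZMod (n+1)) = x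
    rw [ZMod.natCast_rightInverse (x - j), add_sub_cancel]
  · exact fun a _ => rfl

omit hn h1 h2 h0

lemma telescope (f : ℕ → ℤ) (a : ℕ) : ∀ len : ℕ,
    |f a - f (a + len)| ≤ ∑ s ∈ Finset.Ico a (a + len), (f s - f (s+1))^2 := by
  intro len
  induction len with
  | zero => simp
  | succ len ih =>
    have habs : |f a - f (a + (len+1))| ≤ |f a - f (a+len)| + |f (a+len) - f (a+len+1)| := by
      have := abs_sub_le (f a) (f (a+len)) (f (a+len+1))
      rwa [show a + (len+1) = a + len + 1 by omega]
    have hsq : |f (a+len) - f (a+len+1)| ≤ (f (a+len) - f (a+len+1))^2 := by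
      rw [Int.abs_eq_natAbs]
      exact Int.natAbs_le_self_sq _
    rw [show a + (len+1) = (a+len) + 1 by omega, Finset.sum_Ico_succ_top (by omega)]
    calc |f a - f (a+len+1)| ≤ |f a - f (a+len)| + |f (a+len) - f (a+len+1)| := by
          have := abs_sub_le (f a) (f (a+len)) (f (a+len+1)); rwa [show a + len + 1 = a + (len+1) by omega] at this ⊢
      _ ≤ (∑ s ∈ Finset.Ico a (a+len), (f s - f (s+1))^2) + (f (a+len) - f (a+len+1))^2 :=
          add_le_add ih hsq

include hn h1 h2 h0

lemma coeff_ge_one {c : ZMod (n+1) → ℤ} (hq : S.BF c c = 2) (hpos : ∀ i, 0 ≤ c i)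
    {i₀ : ZMod (n+1)} (h2c : 2 ≤ c i₀) : ∀ j, 1 ≤ c j := by
  haveI : NeZero (n+1) := ⟨Nat.succ_ne_zero n⟩
  intro j
  by_contra hj
  push_neg at hj
  have hj0 : c j = 0 := le_antisymm (by omega) (hpos j)
  set f : ℕ → ℤ := fun s => c (j + (s:ℕ)) with hf
  have hstep : ∀ s : ℕ, (f s - f (s+1))^2 = (fun i => (c i - c (i+1))^2) (j + (s:ℕ)) := by
    intro s
    have : ((s+1 : ℕ) : ZMod (n+1)) = ((s:ℕ) : ZMod (n+1)) + 1 := by push_cast; ring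
    simp only [hf, this, ← add_assoc]
  have htot : ∑ s ∈ Finset.range (n+1), (f s - f (s+1))^2 = 2 := by
    calc ∑ s ∈ Finset.range (n+1), (f s - f (s+1))^2
        = ∑ s ∈ Finset.range (n+1), (fun i => (c i - c (i+1))^2) (j + (s:ℕ)) :=
          Finset.sum_congr rfl fun s _ => hstep s
      _ = ∑ i, (c i - c (i+1))^2 := sum_range_cycle hn S h1 h2 h0 (fun i => (c i - c (i+1))^2) j
      _ = 2 := by rw [← BF_quad hn S h1 h2 h0, hq]
  set v := (i₀ - j).val with hv
  have hv_lt : v < n+1 := ZMod.val_lt _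
  have hjv : j + (v : ℕ) = i₀ := by
    rw [hv, ZMod.natCast_rightInverse (i₀ - j), add_sub_cancel]
  have hvne : v ≠ 0 := by
    intro h0'
    rw [h0'] at hjv
    simp at hjv
    rw [← hjv] at h2c
    omega
  have hf0 : f 0 = 0 := by simpa [hf] using hj0
  have hfv : f v = c i₀ := by show c (j + (v:ℕ)) = c i₀; rw [hjv]
  have hfm : f (n+1) = 0 := by
    have : ((n+1 : ℕ) : ZMod (n+1)) = 0 := ZMod.natCast_self _
    simp only [hf, this, add_zero]
    exact hj0
  have p1 : (2:ℤ) ≤ ∑ s ∈ Finset.Ico 0 v, (f s - f (s+1))^2 := by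
    have := telescope f 0 v
    rw [zero_add] at this
    have habs : (2:ℤ) ≤ |f 0 - f v| := by rw [hf0, hfv]; rw [abs_sub_comm]; rw [abs_of_nonneg (by omega)]; omega
    calc (2:ℤ) ≤ |f 0 - f v| := habs
      _ ≤ _ := by simpa using this
  have p2 : (2:ℤ) ≤ ∑ s ∈ Finset.Ico v (n+1), (f s - f (s+1))^2 := by
    have := telescope f v (n+1-v)
    rw [show v + (n+1-v) = n+1 by omega] at this
    have habs : (2:ℤ) ≤ |f v - f (n+1)| := by
      rw [hfv, hfm, abs_of_nonneg (by omega)]; omega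
    exact le_trans habs this
  have hsplit : (∑ s ∈ Finset.Ico 0 v, (f s - f (s+1))^2)
      + (∑ s ∈ Finset.Ico v (n+1), (f s - f (s+1))^2)
      = ∑ s ∈ Finset.range (n+1), (f s - f (s+1))^2 := by
    rw [Finset.range_eq_Ico]
    exact Finset.sum_Ico_consecutive _ (by omega) (by omega)
  omega

omit hn h1 h2 h0

def arcC (j : ZMod (n+1)) (t : ℕ) : ZMod (n+1) → ℤ :=
  fun k => if ∃ s : ℕ, s ≤ t ∧ k = j + (s:ℕ) then 1 else 0

include hn

lemma arcC_zero (j : ZMod (n+1)) : arcC j 0 = Pi.single j 1 := by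
  funext k
  rw [arcC, Pi.single_apply]
  congr 1
  simp only [Nat.le_zero, eq_iff_iff]
  constructor
  · rintro ⟨s, rfl, rfl⟩; simp
  · rintro rfl; exact ⟨0, rfl, by simp⟩

lemma arcC_succ (j : ZMod (n+1)) (t : ℕ) (ht : t + 2 ≤ n) :
    arcC j (t+1) = arcC (j+1) t + Pi.single j 1 := by
  funext k
  rw [Pi.add_apply, Pi.single_apply, arcC, arcC]
  by_cases hk : k = j
  · subst hk
    have hpos' : ∃ s ≤ t+1, k = k + ((s:ℕ) : ZMod (n+1)) := ⟨0, by omega, by simp⟩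
    have hneg' : ¬∃ s ≤ t, k = (k+1) + ((s:ℕ) : ZMod (n+1)) := by
      rintro ⟨s, hs, hks⟩
      have : ((s+1 : ℕ) : ZMod (n+1)) = 0 := by
        push_cast
        linear_combination -hks
      exact cast_ne_zero' (n := n) (by omega) (by omega) this
    rw [if_pos hpos', if_neg hneg', if_pos rfl]
    norm_num
  · rw [if_neg hk, add_zero]
    congr 1
    simp only [eq_iff_iff]
    constructor
    · rintro ⟨s, hs, hks⟩
      cases s with
      | zero => exact absurd (by rw [hks]; simp) hk
      | succ s => exact ⟨s, by omega, by rw [hks]; push_cast; ring⟩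
    · rintro ⟨s, hs, hks⟩
      exact ⟨s+1, by omega, by rw [hks]; push_cast; ring⟩

include h1 h2 h0

lemma arcC_piF (j : ZMod (n+1)) (t : ℕ) (ht : t + 2 ≤ n) :
    S.piF j (arcC (j+1) t) = -1 := by
  rw [piF_eq hn S h1 h2 h0]
  have hj : arcC (j+1) t j = 0 := by
    rw [arcC, if_neg]
    rintro ⟨s, hs, hks⟩
    have : ((s+1 : ℕ) : ZMod (n+1)) = 0 := by
      push_cast; push_cast at hks; linear_combination -hks
    exact cast_ne_zero' (n := n) (by omega) (by omega) this
  have hj1 : arcC (j+1) t (j+1) = 1 := by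
    rw [arcC, if_pos ⟨0, by omega, by simp⟩]
  have hjm : arcC (j+1) t (j-1) = 0 := by
    rw [arcC, if_neg]
    rintro ⟨s, hs, hks⟩
    have : ((s+2 : ℕ) : ZMod (n+1)) = 0 := by
      push_cast; push_cast at hks; linear_combination -hks
    exact cast_ne_zero' (n := n) (by omega) (by omega) this
  rw [hj, hj1, hjm]
  ring

lemma arc_root : ∀ t : ℕ, t + 1 ≤ n → ∀ j : ZMod (n+1), S.IsRoot (S.phi (arcC j t)) := by
  intro t
  induction t with
  | zero =>
    intro _ j
    rw [arcC_zero hn, phi_single]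
    exact ⟨⟨[], j⟩, rfl⟩
  | succ t ih =>
    intro ht j
    have harc := arcC_succ hn j t (by omega)
    have hrho : S.rho j (arcC (j+1) t) = arcC j (t+1) := by
      rw [rho, arcC_piF hn S h1 h2 h0 j t (by omega), harc]
      funext k
      simp [Pi.single_apply]
    have : S.phi (arcC j (t+1)) = S.reflX j (S.phi (arcC (j+1) t)) := by
      rw [← hrho, phi_rho]
    rw [this]
    obtain ⟨⟨l, i⟩, hp⟩ := ih (by omega) (j+1)
    exact ⟨⟨j :: l, i⟩, by rw [wordX_cons, ← hp]⟩

lemma arcC_full (i : ZMod (n+1)) : arcC (i+1) (n-1) = (fun k => 1 - (Pi.single i (1:ℤ) : ZMod (n+1) → ℤ) k) := by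
  haveI : NeZero (n+1) := ⟨Nat.succ_ne_zero n⟩
  funext k
  rw [arcC, Pi.single_apply]
  by_cases hk : k = i
  · subst hk
    have hneg' : ¬∃ s ≤ n-1, k = (k+1) + ((s:ℕ) : ZMod (n+1)) := by
      rintro ⟨s, hs, hks⟩
      have : ((s+1 : ℕ) : ZMod (n+1)) = 0 := by
        push_cast
        linear_combination -hks
      exact cast_ne_zero' (n := n) (by omega) (by omega) this
    rw [if_neg hneg', if_pos rfl]
    ring
  · have hpos' : ∃ s ≤ n-1, k = (i+1) + ((s:ℕ) : ZMod (n+1)) := by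
      set w := (k - i - 1).val with hw
      have hwlt : w < n + 1 := ZMod.val_lt _
      have hkw : k = i + 1 + (w : ℕ) := by
        rw [hw, ZMod.natCast_rightInverse (k - i - 1)]
        ring
      refine ⟨w, ?_, hkw⟩
      by_contra hcon
      have hwn : w = n := by omega
      rw [hwn] at hkw
      apply hk
      rw [hkw]
      have hz : ((n+1 : ℕ) : ZMod (n+1)) = 0 := ZMod.natCast_self _
      push_cast at hz
      linear_combination hz
    rw [if_pos hpos', if_neg hk]
    ring

lemma isRoot_sub_delta {β : S.X} (h : S.IsRoot β) :
    S.IsRoot (β - S.phi (fun _ => 1)) := by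
  obtain ⟨⟨l, i⟩, hp⟩ := h
  have hp' : β = S.wordX l (S.α i) := hp
  set g : ZMod (n+1) → ℤ := fun k => 1 - (Pi.single i (1:ℤ) : ZMod (n+1) → ℤ) k with hg
  have hroot : S.IsRoot (S.phi g) := by
    rw [hg, ← arcC_full hn S h1 h2 h0 i]
    exact arc_root hn S h1 h2 h0 (n-1) (by omega) (i+1)
  have hneg : S.IsRoot (-(S.phi g)) := S.isRoot_neg hroot
  have heq : β - S.phi (fun _ => 1) = S.wordX l (-(S.phi g)) := by
    rw [map_neg]
    have h1' : S.phi g = S.phi (fun _ => 1) - S.α i := by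
      rw [show g = (fun _ => (1:ℤ)) - (Pi.single i (1:ℤ) : ZMod (n+1) → ℤ) from rfl,
        phi_sub, phi_single]
    rw [h1', map_sub, neg_sub, ← hp', wordX_phi, Rho_delta S (piF_delta hn S h1 h2 h0)]
  rw [heq]
  exact S.isRoot_wordX l hneg

end TypeA

end KMD

namespace KMD

open scoped Classical

variable {I : Type} [Fintype I] [DecidableEq I]

/-- In affine type `A_n^{(1)}` (`n ≥ 2`), with simple roots indexed cyclically by
`ℤ/(n+1)ℤ`, the quantum roots are exactly the positive real roots all of whose
simple-root coefficients lie in `{0, 1}` (sums of simple roots over arcs of the cycle). -/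
theorem quantum_roots_affine_A (n : ℕ) (hn : 2 ≤ n) (S : KMD (ZMod (n + 1)))
    (h1 : ∀ i : ZMod (n + 1), S.A i (i + 1) = -1)
    (h2 : ∀ i : ZMod (n + 1), S.A i (i - 1) = -1)
    (h0 : ∀ i j : ZMod (n + 1), j ≠ i → j ≠ i + 1 → j ≠ i - 1 → S.A i j = 0) :
    ∀ β : S.X, S.IsQuantum β ↔
      (S.IsPosRoot β ∧ ∃ c : ZMod (n + 1) → ℤ, (∀ i, c i = 0 ∨ c i = 1) ∧
        β = ∑ i, c i • S.α i) := by
  have hA : ∀ i j, S.A i j = S.A j i := A_symm hn S h1 h2 h0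
  intro β
  constructor
  · rintro ⟨hpos, hquant⟩
    refine ⟨hpos, ?_⟩
    obtain ⟨hr, cN, hcN⟩ := hpos
    set b : ZMod (n+1) → ℤ := fun i => (cN i : ℤ) with hbdef
    have hb : β = S.phi b := hcN
    obtain ⟨b', hb', hnorm⟩ := S.root_norm hA hr
    have hbb : b' = b := S.phi_inj (hb'.symm.trans hb)
    rw [hbb] at hnorm
    have hble : ∀ i, b i ≤ 1 := by
      by_contra hcon
      push_neg at hcon
      obtain ⟨i₀, hi₀⟩ := hcon
      have hge1 : ∀ j, 1 ≤ b j :=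
        coeff_ge_one hn S h1 h2 h0 hnorm (fun i => Int.natCast_nonneg _) (i₀ := i₀) (by omega)
      set γ := β - S.phi (fun _ => 1) with hγdef
      have hγroot : S.IsRoot γ := isRoot_sub_delta hn S h1 h2 h0 hr
      have hγ : γ = S.phi (b - fun _ => 1) := by rw [hγdef, phi_sub, hb]
      have hγpos : S.IsPosRoot γ := by
        refine ⟨hγroot, fun i => (b i - 1).toNat, ?_⟩
        have hcoerce : (fun i => (((b i - 1).toNat : ℕ) : ℤ)) = b - fun _ => 1 :=
          funext fun i => by
            rw [Int.toNat_of_nonneg (show (0:ℤ) ≤ b i - 1 by linarith [hge1 i])]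
            rfl
        have hph : S.phi (fun i => (((b i - 1).toNat : ℕ) : ℤ)) = S.phi (b - fun _ => 1) := by
          rw [hcoerce]
        rw [hγ, ← hph]
        rfl
      have hpair : S.P (S.coroot β) γ = 2 := by
        rw [hγ, S.coroot_pair hA hr hb, S.BF_sub_right,
          BF_delta_right S (piF_delta hn S h1 h2 h0), hnorm]
        norm_num
      have hsγ : S.sReflX β γ = -(S.phi (b + fun _ => 1)) := by
        rw [S.sReflX_apply hr, hpair, hγ, hb,
          show (2:ℤ) • S.phi b = S.phi ((2:ℤ) • b) from (S.phi_smul 2 b).symm,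
          ← phi_sub, ← phi_neg]
        congr 1
        funext i
        simp
        ring
      have hsneg : S.IsNegRoot (S.sReflX β γ) := by
        refine ⟨S.isRoot_sReflX hr hγroot, fun i => (b i + 1).toNat, ?_⟩
        have hcoerce : (fun i => (((b i + 1).toNat : ℕ) : ℤ)) = b + fun _ => 1 :=
          funext fun i => by
            rw [Int.toNat_of_nonneg (show (0:ℤ) ≤ b i + 1 by linarith [hge1 i])]
            rfl
        have hph : S.phi (fun i => (((b i + 1).toNat : ℕ) : ℤ)) = S.phi (b + fun _ => 1) := by
          rw [hcoerce]
        rw [hsγ, ← hph]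
        rfl
      have hγne : γ ≠ β := by
        intro hEq
        have h' := S.phi_inj ((hγ.symm.trans hEq).trans hb)
        have := congrFun h' i₀
        simp at this
      have hq1 := hquant γ ⟨hγpos, hsneg⟩ hγne
      rw [hpair] at hq1
      norm_num at hq1
    refine ⟨b, fun i => ?_, hb⟩
    have h0' : (0:ℤ) ≤ b i := Int.natCast_nonneg _
    have := hble i
    omega
  · rintro ⟨hpos, c, hc01, hc⟩
    refine ⟨hpos, ?_⟩
    intro γ hγmem hne
    obtain ⟨hγpos, hγneg⟩ := hγmem
    obtain ⟨hγr, dN, hdN⟩ := hγpos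
    have hr := hpos.1
    have hb : β = S.phi c := hc
    set d : ZMod (n+1) → ℤ := fun i => (dN i : ℤ) with hddef
    have hd : γ = S.phi d := hdN
    obtain ⟨b', hb', hBb⟩ := S.root_norm hA hr
    have hbb : b' = c := S.phi_inj (hb'.symm.trans hb)
    rw [hbb] at hBb
    obtain ⟨d', hd', hBd⟩ := S.root_norm hA hγr
    have hdd : d' = d := S.phi_inj (hd'.symm.trans hd)
    rw [hdd] at hBd
    set cp := S.BF c d with hcpdef
    have hcp : S.P (S.coroot β) γ = cp := by rw [hd, S.coroot_pair hA hr hb]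
    obtain ⟨hsr, eN, heN⟩ := hγneg
    set e : ZMod (n+1) → ℤ := fun i => (eN i : ℤ) with hedef
    have hsγ : S.sReflX β γ = S.phi (d - cp • c) := by
      rw [S.sReflX_apply hr, hcp, hd, hb,
        show cp • S.phi c = S.phi (cp • c) from (S.phi_smul cp c).symm, ← phi_sub]
    have he : d - cp • c = -e := by
      apply S.phi_inj
      rw [← hsγ, heN, phi_neg]
      rfl
    have hrel : ∀ j, d j - cp * c j = -(e j) := fun j => by
      have := congrFun he j
      simpa using this
    have hd0 : ∀ j, (0:ℤ) ≤ d j := fun j => Int.natCast_nonneg _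
    have he0 : ∀ j, (0:ℤ) ≤ e j := fun j => Int.natCast_nonneg _
    have hc0 : ∀ j, (0:ℤ) ≤ c j := fun j => by rcases hc01 j with h|h <;> omega
    have hne0 : ∃ j, d j ≠ 0 := by
      by_contra hall
      push_neg at hall
      have hdz : d = 0 := funext hall
      have : γ = 0 := by rw [hd, hdz, phi_zero]
      exact S.root_ne_zero hγr this
    have hcp1 : 1 ≤ cp := by
      by_contra hlt
      push_neg at hlt
      have hallz : ∀ j, d j = 0 := by
        intro j
        have h1j := hrel j
        have hcc : cp * c j ≤ 0 := by
          rcases hc01 j with h|h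
          · rw [h, mul_zero]
          · rw [h, mul_one]; omega
        linarith [hd0 j, he0 j]
      exact hne0.elim fun j hj => hj (hallz j)
    have hcp2 : cp ≤ 2 := by
      have h0' := BF_self_nonneg hn S h1 h2 h0 (c - d)
      rw [S.BF_sub_left, S.BF_sub_right, S.BF_sub_right, S.BF_symm hA d c] at h0'
      rw [hBb, hBd, ← hcpdef] at h0'
      linarith
    have hcases : cp = 1 ∨ cp = 2 := by omega
    rcases hcases with hcp' | hcp'
    · rw [hcp, hcp']
    · exfalso
      have hz : S.BF (c - d) (c - d) = 0 := by
        rw [S.BF_sub_left, S.BF_sub_right, S.BF_sub_right, S.BF_symm hA d c,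
          hBb, hBd, ← hcpdef, hcp']
        ring
      have hconst := BF_zero_const hn S h1 h2 h0 hz
      have hnotall : ∃ j, c j = 0 := by
        by_contra hall
        push_neg at hall
        have hall1 : ∀ j, c j = 1 := fun j => (hc01 j).resolve_left (hall j)
        have hc1 : c = fun _ => 1 := funext hall1
        rw [hc1, BF_delta_right S (piF_delta hn S h1 h2 h0)] at hBb
        norm_num at hBb
      obtain ⟨j0, hj0⟩ := hnotall
      have hdj0 : d j0 = 0 := by
        have h1j := hrel j0
        rw [hcp', hj0] at h1j
        linarith [hd0 j0, he0 j0]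
      have ht0 : (c - d) 0 = 0 := by
        have := hconst j0
        rw [show (c - d) j0 = c j0 - d j0 from rfl, hj0, hdj0] at this
        omega
      have hcd : c = d := by
        funext j
        have := hconst j
        rw [ht0] at this
        have : c j - d j = 0 := this
        omega
      apply hne
      rw [hd, ← hcd, ← hb]

end KMD
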